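/- There is an absolute constant C > 0 with the following property. Let h > 0, let (x₀, y₀) ∈ ℝ², let C_h = [x₀, x₀+h] × [y₀, y₀+h], and let f : ℝ² → ℝ be four times continuously differentiable on a neighborhood of C_h, with M₄ an upper bound for the absolute values of all partial derivatives of f of order at most 4 on C_h. Let T(f) = (h²/4)·(f(x₀,y₀) + f(x₀+h,y₀) + f(x₀,y₀+h) + f(x₀+h,y₀+h)) be the two-dimensional trapezoidal rule on C_h, and let c = (x₀+h/2, y₀+h/2) be the center of C_h. Then |∫_{C_h} f − T(f) + (h⁴/12)·Δf(c)| ≤ C·M₄·h⁶, where Δf = ∂²f/∂x² + ∂²f/∂y². -/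

import Mathlib

open MeasureTheory Set

/-- Partial derivative in the first variable. -/
noncomputable def pdx (f : ℝ × ℝ → ℝ) (p : ℝ × ℝ) : ℝ :=
  deriv (fun x => f (x, p.2)) p.1

/-- Partial derivative in the second variable. -/
noncomputable def pdy (f : ℝ × ℝ → ℝ) (p : ℝ × ℝ) : ℝ :=
  deriv (fun y => f (p.1, y)) p.2

/-- The Laplacian `Δf = ∂²f/∂x² + ∂²f/∂y²`. -/
noncomputable def lap2 (f : ℝ × ℝ → ℝ) (p : ℝ × ℝ) : ℝ :=
  pdx (pdx f) p + pdy (pdy f) p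

open Nat

set_option maxHeartbeats 1000000



noncomputable def dvf (v : ℝ × ℝ) (f : ℝ × ℝ → ℝ) (p : ℝ × ℝ) : ℝ := fderiv ℝ f p v

lemma dvf_contDiffOn {U : Set (ℝ × ℝ)} (hU : IsOpen U) {m : ℕ} {f : ℝ × ℝ → ℝ}
    (hf : ContDiffOn ℝ (m + 1 : ℕ) f U) (v : ℝ × ℝ) :
    ContDiffOn ℝ (m : ℕ) (dvf v f) U := by
  intro p hp
  have h1 : ContDiffAt ℝ (m + 1 : ℕ) f p := hf.contDiffAt (hU.mem_nhds hp)
  have h2 : ContDiffAt ℝ (m : ℕ) (fderiv ℝ f) p := h1.fderiv_right (by norm_cast)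
  have h3 : ContDiffAt ℝ (m : ℕ) (dvf v f) p :=
    (ContinuousLinearMap.apply ℝ ℝ v).contDiff.contDiffAt.comp p h2
  exact h3.contDiffWithinAt

lemma foldr_dvf_eq {U : Set (ℝ × ℝ)} (hU : IsOpen U) :
    ∀ (L : List (ℝ × ℝ)) (f : ℝ × ℝ → ℝ), ContDiffOn ℝ (L.length : ℕ) f U →
      ∀ p ∈ U, L.foldr dvf f p
        = iteratedFDeriv ℝ L.length f p (fun i => L.get i) := by
  intro L
  induction L with
  | nil => intro f hf p hp; simp
  | cons v L ih =>
    intro f hf p hp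
    have hlen : ((L.length : ℕ) : WithTop ℕ∞) ≤ ((v :: L).length : ℕ) := by
      norm_cast; simp
    have hf' := hf.of_le hlen
    have heq : (L.foldr dvf f) =ᶠ[nhds p]
        (fun q => iteratedFDeriv ℝ L.length f q (fun i => L.get i)) := by
      filter_upwards [hU.mem_nhds hp] with q hq using ih f hf' q hq
    have hdiff : DifferentiableAt ℝ (iteratedFDeriv ℝ L.length f) p := by
      have h1 : ContDiffAt ℝ (((v :: L).length : ℕ)) f p := hf.contDiffAt (hU.mem_nhds hp)
      have h2 := h1.iteratedFDeriv_right (i := L.length) (m := 1)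
        (by rw [List.length_cons]; push_cast; rw [add_comm])
      exact h2.differentiableAt (by norm_num)
    have hA : (fun q => iteratedFDeriv ℝ L.length f q (fun i => L.get i))
        = (ContinuousMultilinearMap.apply ℝ (fun _ : Fin L.length => ℝ × ℝ) ℝ
            (fun i => L.get i)) ∘ (iteratedFDeriv ℝ L.length f) := rfl
    have step : (v :: L).foldr dvf f p = fderiv ℝ (L.foldr dvf f) p v := rfl
    rw [step, heq.fderiv_eq, hA]
    have hcomp := ((ContinuousMultilinearMap.apply ℝ (fun _ : Fin L.length => ℝ × ℝ) ℝ
        (fun i => L.get i)).hasFDerivAt.comp p hdiff.hasFDerivAt).fderiv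
    rw [hcomp]
    rfl

lemma foldr_dvf_bound {U : Set (ℝ × ℝ)} (hU : IsOpen U) {f : ℝ × ℝ → ℝ} {L : List (ℝ × ℝ)}
    (hf : ContDiffOn ℝ (L.length : ℕ) f U)
    (hv : ∀ v ∈ L, ‖v‖ ≤ 1) {p : ℝ × ℝ} (hp : p ∈ U) :
    |L.foldr dvf f p| ≤ ‖iteratedFDeriv ℝ L.length f p‖ := by
  rw [foldr_dvf_eq hU L f hf p hp, ← Real.norm_eq_abs]
  have h1 := (iteratedFDeriv ℝ L.length f p).le_opNorm (fun i => L.get i)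
  have h2 : (∏ i, ‖L.get i‖) ≤ 1 :=
    Finset.prod_le_one (fun i _ => norm_nonneg _) (fun i _ => hv _ (L.get_mem i))
  have h3 : ‖iteratedFDeriv ℝ L.length f p‖ * (∏ i, ‖L.get i‖)
      ≤ ‖iteratedFDeriv ℝ L.length f p‖ * 1 :=
    mul_le_mul_of_nonneg_left h2 (norm_nonneg _)
  calc ‖iteratedFDeriv ℝ L.length f p (fun i => L.get i)‖
      ≤ ‖iteratedFDeriv ℝ L.length f p‖ * ∏ i, ‖L.get i‖ := h1
    _ ≤ _ := by rw [mul_one] at h3; exact h3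

section B
lemma foldr_dvf_contDiffOn {U : Set (ℝ × ℝ)} (hU : IsOpen U) {f : ℝ × ℝ → ℝ} :
    ∀ (L : List (ℝ × ℝ)) (m : ℕ), ContDiffOn ℝ ((L.length + m : ℕ)) f U →
      ContDiffOn ℝ (m : ℕ) (L.foldr dvf f) U := by
  intro L
  induction L with
  | nil => intro m hf; simpa using hf
  | cons v L ih =>
    intro m hf
    have h1 : ContDiffOn ℝ ((m : ℕ) + 1 : ℕ) (L.foldr dvf f) U := by
      have := ih (m + 1) (by
        have : (v :: L).length + m = L.length + (m + 1) := by simp [List.length_cons]; omega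
        rwa [this] at hf)
      exact_mod_cast this
    have h2 : ContDiffOn ℝ (m : ℕ) (dvf v (L.foldr dvf f)) U := by
      intro p hp
      have hc : ContDiffAt ℝ ((m : ℕ) + 1 : ℕ) (L.foldr dvf f) p := h1.contDiffAt (hU.mem_nhds hp)
      have hd : ContDiffAt ℝ (m : ℕ) (fderiv ℝ (L.foldr dvf f)) p := hc.fderiv_right (by norm_cast)
      exact ((ContinuousLinearMap.apply ℝ ℝ v).contDiff.contDiffAt.comp p hd).contDiffWithinAt
    exact h2

lemma hasDerivAt_slice_x {U : Set (ℝ × ℝ)} (hU : IsOpen U) {f : ℝ × ℝ → ℝ}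
    (hf : DifferentiableOn ℝ f U) {t y : ℝ} (hp : (t, y) ∈ U) :
    HasDerivAt (fun x => f (x, y)) (dvf (1, 0) f (t, y)) t := by
  have h1 : HasDerivAt (fun x : ℝ => (x, y)) ((1 : ℝ), (0 : ℝ)) t :=
    (hasDerivAt_id t).prodMk (hasDerivAt_const t y)
  have h2 : HasFDerivAt f (fderiv ℝ f (t, y)) (t, y) :=
    (hf.differentiableAt (hU.mem_nhds hp)).hasFDerivAt
  exact h2.comp_hasDerivAt t h1

lemma hasDerivAt_slice_y {U : Set (ℝ × ℝ)} (hU : IsOpen U) {f : ℝ × ℝ → ℝ}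
    (hf : DifferentiableOn ℝ f U) {x t : ℝ} (hp : (x, t) ∈ U) :
    HasDerivAt (fun y => f (x, y)) (dvf (0, 1) f (x, t)) t := by
  have h1 : HasDerivAt (fun y : ℝ => (x, y)) ((0 : ℝ), (1 : ℝ)) t :=
    (hasDerivAt_const t x).prodMk (hasDerivAt_id t)
  have h2 : HasFDerivAt f (fderiv ℝ f (x, t)) (x, t) :=
    (hf.differentiableAt (hU.mem_nhds hp)).hasFDerivAt
  exact h2.comp_hasDerivAt t h1

/-- A chain of derivatives gives smoothness on an open set. -/
lemma chain_contDiffOn : ∀ (n : ℕ) (g : ℕ → ℝ → ℝ) (O : Set ℝ), IsOpen O →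
    (∀ k < n, ∀ t ∈ O, HasDerivAt (g k) (g (k + 1) t) t) →
    ContinuousOn (g n) O → ContDiffOn ℝ (n : ℕ) (g 0) O := by
  intro n
  induction n with
  | zero => intro g O _ _ hcont; exact (contDiffOn_zero).mpr hcont
  | succ n ih =>
    intro g O hO hder hcont
    have hcast : ((n + 1 : ℕ) : WithTop ℕ∞) = (n : ℕ) + 1 := by push_cast; rfl
    rw [hcast, contDiffOn_succ_iff_deriv_of_isOpen hO]
    refine ⟨fun t ht => ((hder 0 (by omega) t ht).differentiableAt).differentiableWithinAt,
      ?_, ?_⟩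
    · intro hω; exact absurd hω (by simp)
    · have hIH := ih (fun k => g (k + 1)) O hO
        (fun k hk t ht => hder (k + 1) (by omega) t ht) hcont
      exact hIH.congr (fun t ht => (hder 0 (by omega) t ht).deriv)

/-- A chain of derivatives computes `iteratedDerivWithin` on `Icc`. -/
lemma chain_iteratedDerivWithin {a b : ℝ} (hab : a < b) :
    ∀ (n : ℕ) (g : ℕ → ℝ → ℝ) (O : Set ℝ), IsOpen O → Icc a b ⊆ O →
    (∀ k < n, ∀ t ∈ O, HasDerivAt (g k) (g (k + 1) t) t) →
    ∀ k ≤ n, ∀ t ∈ Icc a b, iteratedDerivWithin k (g 0) (Icc a b) t = g k t := by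
  intro n g O hO hsub hder k
  induction k with
  | zero => intro _ t ht; simp
  | succ k ih =>
    intro hk t ht
    rw [iteratedDerivWithin_succ]
    have h1 : EqOn (iteratedDerivWithin k (g 0) (Icc a b)) (g k) (Icc a b) :=
      fun u hu => ih (by omega) u hu
    rw [derivWithin_congr h1 (h1 ht)]
    exact ((hder k (by omega) t (hsub ht)).hasDerivWithinAt).derivWithin
      ((uniqueDiffOn_Icc hab) t ht)
end B
section C

/-- Quantitative Taylor bound for a derivative chain. -/
lemma chain_taylor {a b M : ℝ} (hab : a < b) (n : ℕ) (g : ℕ → ℝ → ℝ) (O : Set ℝ)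
    (hO : IsOpen O) (hsub : Icc a b ⊆ O)
    (hder : ∀ k < n + 1, ∀ t ∈ O, HasDerivAt (g k) (g (k + 1) t) t)
    (hcont : ContinuousOn (g (n + 1)) O)
    (hM : ∀ t ∈ Icc a b, |g (n + 1) t| ≤ M) :
    ∀ x ∈ Icc a b,
      |g 0 x - ∑ k ∈ Finset.range (n + 1), ((x - a) ^ k / k !) * g k a|
        ≤ M * (x - a) ^ (n + 1) / n ! := by
  intro x hx
  have hcd : ContDiffOn ℝ ((n + 1 : ℕ)) (g 0) (Icc a b) :=
    (chain_contDiffOn (n + 1) g O hO hder hcont).mono hsub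
  have hcd' : ContDiffOn ℝ ((n : ℕ) + 1) (g 0) (Icc a b) := by exact_mod_cast hcd
  have hC : ∀ y ∈ Icc a b, ‖iteratedDerivWithin (n + 1) (g 0) (Icc a b) y‖ ≤ M := by
    intro y hy
    rw [Real.norm_eq_abs,
      chain_iteratedDerivWithin hab (n + 1) g O hO hsub hder (n + 1) le_rfl y hy]
    exact hM y hy
  have := taylor_mean_remainder_bound (le_of_lt hab) hcd' hx hC
  rw [Real.norm_eq_abs] at this
  have hT : taylorWithinEval (g 0) n (Icc a b) a x
      = ∑ k ∈ Finset.range (n + 1), ((x - a) ^ k / k !) * g k a := by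
    rw [taylor_within_apply]
    refine Finset.sum_congr rfl fun k hk => ?_
    rw [Finset.mem_range] at hk
    rw [chain_iteratedDerivWithin hab (n + 1) g O hO hsub hder k (by omega) a
      (left_mem_Icc.mpr hab.le)]
    simp only [smul_eq_mul]; ring
  rw [hT] at this
  exact this
end C

section D
/-- First-order Taylor bound. -/
lemma chain_taylor1 {a b M : ℝ} (hab : a < b) (g : ℕ → ℝ → ℝ) (O : Set ℝ)
    (hO : IsOpen O) (hsub : Icc a b ⊆ O)
    (hder : ∀ k < 2, ∀ t ∈ O, HasDerivAt (g k) (g (k + 1) t) t)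
    (hcont : ContinuousOn (g 2) O)
    (hM : ∀ t ∈ Icc a b, |g 2 t| ≤ M) :
    ∀ x ∈ Icc a b, |g 0 x - (g 0 a + (x - a) * g 1 a)| ≤ M * (x - a) ^ 2 := by
  intro x hx
  have := chain_taylor hab 1 g O hO hsub hder hcont hM x hx
  norm_num [Finset.sum_range_succ] at this
  convert this using 2
  all_goals ring

/-- Third-order Taylor bound. -/
lemma chain_taylor3 {a b M : ℝ} (hab : a < b) (g : ℕ → ℝ → ℝ) (O : Set ℝ)
    (hO : IsOpen O) (hsub : Icc a b ⊆ O)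
    (hder : ∀ k < 4, ∀ t ∈ O, HasDerivAt (g k) (g (k + 1) t) t)
    (hcont : ContinuousOn (g 4) O)
    (hM : ∀ t ∈ Icc a b, |g 4 t| ≤ M) :
    ∀ x ∈ Icc a b, |g 0 x - (g 0 a + (x - a) * g 1 a + (x - a) ^ 2 / 2 * g 2 a
      + (x - a) ^ 3 / 6 * g 3 a)| ≤ M * (x - a) ^ 4 / 6 := by
  intro x hx
  have := chain_taylor hab 3 g O hO hsub hder hcont hM x hx
  norm_num [Finset.sum_range_succ] at this
  convert this using 2
  all_goals ring

/-- `∫ t in a..a+h, C (t-a)^k = C h^(k+1)/(k+1)`. -/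
lemma integral_const_mul_pow_sub (a h C : ℝ) (k : ℕ) :
    ∫ t in a..(a + h), C * (t - a) ^ k = C * h ^ (k + 1) / ((k : ℝ) + 1) := by
  have hder : ∀ t : ℝ, HasDerivAt (fun t => C * (t - a) ^ (k + 1) / ((k : ℝ) + 1))
      (C * (t - a) ^ k) t := by
    intro t
    have ht : HasDerivAt (fun t : ℝ => t - a) 1 t := (hasDerivAt_id t).sub_const a
    have h2 : HasDerivAt (fun t : ℝ => (t - a) ^ (k + 1))
        (((k : ℝ) + 1) * (t - a) ^ k * 1) t := by
      have := ht.pow (k + 1)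
      norm_num at this ⊢
      exact this
    have h3 := (h2.const_mul C).div_const ((k : ℝ) + 1)
    refine h3.congr_deriv ?_
    have : ((k : ℝ) + 1) ≠ 0 := by positivity
    field_simp
    all_goals ring
  have hcont : Continuous fun t : ℝ => C * (t - a) ^ k := by continuity
  rw [intervalIntegral.integral_eq_sub_of_hasDerivAt (fun t _ => hder t)
    (hcont.intervalIntegrable _ _)]
  simp
  all_goals ring
end D

section E
lemma cubic_primitive (a c0 c1 c2 c3 t : ℝ) :
    HasDerivAt (fun x => c0 * (x - a) + (x - a) ^ 2 / 2 * c1 + (x - a) ^ 3 / 6 * c2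
        + (x - a) ^ 4 / 24 * c3)
      (c0 + (t - a) * c1 + (t - a) ^ 2 / 2 * c2 + (t - a) ^ 3 / 6 * c3) t := by
  have ht : HasDerivAt (fun t : ℝ => t - a) 1 t := (hasDerivAt_id t).sub_const a
  have p2 := ht.pow 2
  have p3 := ht.pow 3
  have p4 := ht.pow 4
  have hsum := (((ht.const_mul c0).add ((p2.div_const 2).mul_const c1)).add
    ((p3.div_const 6).mul_const c2)).add ((p4.div_const 24).mul_const c3)
  refine hsum.congr_deriv ?_
  push_cast
  ring

set_option maxHeartbeats 1000000 in
lemma oneD_A {a h M : ℝ} (hh : 0 < h) (g : ℕ → ℝ → ℝ) (O : Set ℝ) (hO : IsOpen O)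
    (hsub : Icc a (a + h) ⊆ O)
    (hder : ∀ k < 4, ∀ t ∈ O, HasDerivAt (g k) (g (k + 1) t) t)
    (hcont : ContinuousOn (g 4) O)
    (hM : ∀ k ≤ 4, ∀ t ∈ Icc a (a + h), |g k t| ≤ M) :
    |(∫ t in a..(a + h), g 0 t) - (h / 2) * (g 0 a + g 0 (a + h))
      + (h ^ 3 / 12) * g 2 (a + h / 2)| ≤ M * h ^ 5 := by
  have hab : a < a + h := by linarith
  have hcIcc : a + h / 2 ∈ Icc a (a + h) := ⟨by linarith, by linarith⟩
  have hbIcc : a + h ∈ Icc a (a + h) := right_mem_Icc.mpr hab.le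
  have hM0 : 0 ≤ M := le_trans (abs_nonneg _) (hM 0 (by norm_num) a (left_mem_Icc.mpr hab.le))
  set P : ℝ → ℝ := fun x => g 0 a + (x - a) * g 1 a + (x - a) ^ 2 / 2 * g 2 a
    + (x - a) ^ 3 / 6 * g 3 a with hP
  set R : ℝ → ℝ := fun x => g 0 x - P x with hRdef
  have hTay := chain_taylor3 hab g O hO hsub hder hcont (hM 4 le_rfl)
  have hR : ∀ x ∈ Icc a (a + h), |R x| ≤ M * (x - a) ^ 4 / 6 := fun x hx => hTay x hx
  have hE2 := chain_taylor1 hab (fun k => g (k + 2)) O hO hsub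
    (fun k hk t ht => hder (k + 2) (by omega) t ht) hcont
    (hM 4 le_rfl) (a + h / 2) hcIcc
  have hg0cont : ContinuousOn (g 0) (Icc a (a + h)) :=
    fun t ht => ((hder 0 (by omega) t (hsub ht)).continuousAt).continuousWithinAt
  have hPcont : Continuous P := by fun_prop
  have huIcc : uIcc a (a + h) = Icc a (a + h) := uIcc_of_le hab.le
  have hg0int : IntervalIntegrable (g 0) volume a (a + h) :=
    (huIcc ▸ hg0cont).intervalIntegrable
  have hPint : IntervalIntegrable P volume a (a + h) :=
    (hPcont.continuousOn).intervalIntegrable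
  have hRint : IntervalIntegrable R volume a (a + h) := hg0int.sub hPint
  have hIP : ∫ t in a..(a + h), P t
      = h * g 0 a + h ^ 2 / 2 * g 1 a + h ^ 3 / 6 * g 2 a + h ^ 4 / 24 * g 3 a := by
    rw [intervalIntegral.integral_eq_sub_of_hasDerivAt
      (f := fun x => g 0 a * (x - a) + (x - a) ^ 2 / 2 * g 1 a + (x - a) ^ 3 / 6 * g 2 a
        + (x - a) ^ 4 / 24 * g 3 a)
      (fun t _ => cubic_primitive a (g 0 a) (g 1 a) (g 2 a) (g 3 a) t) hPint]
    simp
    ring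
  have hsplit : ∫ t in a..(a + h), g 0 t
      = (∫ t in a..(a + h), P t) + ∫ t in a..(a + h), R t := by
    rw [← intervalIntegral.integral_add hPint hRint]
    apply intervalIntegral.integral_congr
    intro t _
    simp [hRdef]
  have habsint : IntervalIntegrable (fun t => |R t|) volume a (a + h) := hRint.abs
  have hbint : IntervalIntegrable (fun t => M / 6 * (t - a) ^ 4) volume a (a + h) :=
    (by continuity : Continuous fun t : ℝ => M / 6 * (t - a) ^ 4).intervalIntegrable _ _
  have hIR : |∫ t in a..(a + h), R t| ≤ M * h ^ 5 / 30 := by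
    have h1 := intervalIntegral.abs_integral_le_integral_abs (f := R) (μ := volume) hab.le
    have h2 : (∫ t in a..(a + h), |R t|) ≤ ∫ t in a..(a + h), M / 6 * (t - a) ^ 4 :=
      intervalIntegral.integral_mono_on hab.le habsint hbint
        (fun x hx => (hR x hx).trans_eq (by ring))
    have h3 := integral_const_mul_pow_sub a h (M / 6) 4
    rw [h3] at h2
    have : M / 6 * h ^ (4 + 1) / ((4 : ℕ) + 1 : ℝ) = M * h ^ 5 / 30 := by norm_num; ring
    linarith [this ▸ h2]
  have hRb : |R (a + h)| ≤ M * h ^ 4 / 6 := by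
    have := hR (a + h) hbIcc
    simpa using this
  have hE2' : |g 2 (a + h / 2) - (g 2 a + h / 2 * g 3 a)| ≤ M * h ^ 2 / 4 := by
    have h4 : a + h / 2 - a = h / 2 := by ring
    rw [h4] at hE2
    calc |g 2 (a + h / 2) - (g 2 a + h / 2 * g 3 a)| ≤ M * (h / 2) ^ 2 := hE2
      _ = M * h ^ 2 / 4 := by ring
  set IR := ∫ t in a..(a + h), R t with hIRdef
  set E2 := g 2 (a + h / 2) - (g 2 a + h / 2 * g 3 a) with hE2def
  have hg0b : g 0 (a + h) = g 0 a + h * g 1 a + h ^ 2 / 2 * g 2 a + h ^ 3 / 6 * g 3 a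
      + R (a + h) := by
    simp only [hRdef, hP]
    ring
  have hg2c : g 2 (a + h / 2) = g 2 a + h / 2 * g 3 a + E2 := by rw [hE2def]; ring
  have key : (∫ t in a..(a + h), g 0 t) - (h / 2) * (g 0 a + g 0 (a + h))
      + (h ^ 3 / 12) * g 2 (a + h / 2)
      = IR + (-((h / 2) * R (a + h))) + (h ^ 3 / 12) * E2 := by
    rw [hsplit, hIP, hg0b, hg2c]
    ring
  rw [key]
  have htri := abs_add_three IR (-((h / 2) * R (a + h))) ((h ^ 3 / 12) * E2)
  rw [abs_neg, abs_mul, abs_mul] at htri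
  have hc1 : |h / 2| = h / 2 := abs_of_nonneg (by linarith)
  have hc2 : |h ^ 3 / 12| = h ^ 3 / 12 := abs_of_nonneg (by positivity)
  rw [hc1, hc2] at htri
  have b2 : h / 2 * |R (a + h)| ≤ h / 2 * (M * h ^ 4 / 6) :=
    mul_le_mul_of_nonneg_left hRb (by linarith)
  have b3 : h ^ 3 / 12 * |E2| ≤ h ^ 3 / 12 * (M * h ^ 2 / 4) :=
    mul_le_mul_of_nonneg_left hE2' (by positivity)
  have hfin : M * h ^ 5 / 30 + h / 2 * (M * h ^ 4 / 6) + h ^ 3 / 12 * (M * h ^ 2 / 4)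
      ≤ M * h ^ 5 := by nlinarith [pow_nonneg hh.le 5, mul_nonneg hM0 (pow_nonneg hh.le 5)]
  linarith
end E

section F
lemma oneD_B {a h M : ℝ} (hh : 0 < h) (g : ℕ → ℝ → ℝ) (O : Set ℝ) (hO : IsOpen O)
    (hsub : Icc a (a + h) ⊆ O)
    (hder : ∀ k < 2, ∀ t ∈ O, HasDerivAt (g k) (g (k + 1) t) t)
    (hcont : ContinuousOn (g 2) O)
    (hM : ∀ k ≤ 2, ∀ t ∈ Icc a (a + h), |g k t| ≤ M) :
    |(∫ t in a..(a + h), g 0 t) - h * g 0 (a + h / 2)| ≤ M * h ^ 3 := by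
  have hab : a < a + h := by linarith
  have hcIcc : a + h / 2 ∈ Icc a (a + h) := ⟨by linarith, by linarith⟩
  have hM0 : 0 ≤ M := le_trans (abs_nonneg _) (hM 0 (by norm_num) a (left_mem_Icc.mpr hab.le))
  set P : ℝ → ℝ := fun x => g 0 a + (x - a) * g 1 a with hP
  set R : ℝ → ℝ := fun x => g 0 x - P x with hRdef
  have hTay := chain_taylor1 hab g O hO hsub hder hcont (hM 2 le_rfl)
  have hR : ∀ x ∈ Icc a (a + h), |R x| ≤ M * (x - a) ^ 2 := fun x hx => hTay x hx
  have hg0cont : ContinuousOn (g 0) (Icc a (a + h)) :=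
    fun t ht => ((hder 0 (by omega) t (hsub ht)).continuousAt).continuousWithinAt
  have hPcont : Continuous P := by fun_prop
  have huIcc : uIcc a (a + h) = Icc a (a + h) := uIcc_of_le hab.le
  have hg0int : IntervalIntegrable (g 0) volume a (a + h) :=
    (huIcc ▸ hg0cont).intervalIntegrable
  have hPint : IntervalIntegrable P volume a (a + h) :=
    (hPcont.continuousOn).intervalIntegrable
  have hRint : IntervalIntegrable R volume a (a + h) := hg0int.sub hPint
  have hIP : ∫ t in a..(a + h), P t = h * g 0 a + h ^ 2 / 2 * g 1 a := by
    rw [intervalIntegral.integral_eq_sub_of_hasDerivAt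
      (f := fun x => g 0 a * (x - a) + (x - a) ^ 2 / 2 * g 1 a + (x - a) ^ 3 / 6 * 0
        + (x - a) ^ 4 / 24 * 0)
      (fun t _ => by simpa using cubic_primitive a (g 0 a) (g 1 a) 0 0 t) hPint]
    simp
    ring
  have hsplit : ∫ t in a..(a + h), g 0 t
      = (∫ t in a..(a + h), P t) + ∫ t in a..(a + h), R t := by
    rw [← intervalIntegral.integral_add hPint hRint]
    apply intervalIntegral.integral_congr
    intro t _
    simp [hRdef]
  have habsint : IntervalIntegrable (fun t => |R t|) volume a (a + h) := hRint.abs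
  have hbint : IntervalIntegrable (fun t => M * (t - a) ^ 2) volume a (a + h) :=
    (by continuity : Continuous fun t : ℝ => M * (t - a) ^ 2).intervalIntegrable _ _
  have hIR : |∫ t in a..(a + h), R t| ≤ M * h ^ 3 / 3 := by
    have h1 := intervalIntegral.abs_integral_le_integral_abs (f := R) (μ := volume) hab.le
    have h2 : (∫ t in a..(a + h), |R t|) ≤ ∫ t in a..(a + h), M * (t - a) ^ 2 :=
      intervalIntegral.integral_mono_on hab.le habsint hbint (fun x hx => hR x hx)
    have h3 := integral_const_mul_pow_sub a h M 2
    rw [h3] at h2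
    have h4 : M * h ^ (2 + 1) / ((2 : ℕ) + 1 : ℝ) = M * h ^ 3 / 3 := by norm_num
    linarith [h4 ▸ h2]
  have hRc : |R (a + h / 2)| ≤ M * h ^ 2 / 4 := by
    have := hR (a + h / 2) hcIcc
    have h4 : a + h / 2 - a = h / 2 := by ring
    rw [h4] at this
    calc |R (a + h / 2)| ≤ M * (h / 2) ^ 2 := this
      _ = M * h ^ 2 / 4 := by ring
  have hg0c : g 0 (a + h / 2) = g 0 a + h / 2 * g 1 a + R (a + h / 2) := by
    simp only [hRdef, hP]
    ring
  set IR := ∫ t in a..(a + h), R t with hIRdef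
  have key : (∫ t in a..(a + h), g 0 t) - h * g 0 (a + h / 2)
      = IR + (-(h * R (a + h / 2))) := by
    rw [hsplit, hIP, hg0c]
    ring
  rw [key]
  have htri := abs_add_le IR (-(h * R (a + h / 2)))
  rw [abs_neg, abs_mul, abs_of_nonneg hh.le] at htri
  have b2 : h * |R (a + h / 2)| ≤ h * (M * h ^ 2 / 4) :=
    mul_le_mul_of_nonneg_left hRc hh.le
  nlinarith [mul_nonneg hM0 (pow_nonneg hh.le 3)]

lemma oneD_C {a h M : ℝ} (hh : 0 < h) (g : ℕ → ℝ → ℝ) (O : Set ℝ) (hO : IsOpen O)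
    (hsub : Icc a (a + h) ⊆ O)
    (hder : ∀ k < 2, ∀ t ∈ O, HasDerivAt (g k) (g (k + 1) t) t)
    (hcont : ContinuousOn (g 2) O)
    (hM : ∀ k ≤ 2, ∀ t ∈ Icc a (a + h), |g k t| ≤ M) :
    |(g 0 a + g 0 (a + h)) / 2 - g 0 (a + h / 2)| ≤ M * h ^ 2 := by
  have hab : a < a + h := by linarith
  have hcIcc : a + h / 2 ∈ Icc a (a + h) := ⟨by linarith, by linarith⟩
  have hbIcc : a + h ∈ Icc a (a + h) := right_mem_Icc.mpr hab.le
  have hM0 : 0 ≤ M := le_trans (abs_nonneg _) (hM 0 (by norm_num) a (left_mem_Icc.mpr hab.le))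
  have hTay := chain_taylor1 hab g O hO hsub hder hcont (hM 2 le_rfl)
  have hRb := hTay (a + h) hbIcc
  have hRc := hTay (a + h / 2) hcIcc
  have e1 : a + h - a = h := by ring
  have e2 : a + h / 2 - a = h / 2 := by ring
  rw [e1] at hRb
  rw [e2] at hRc
  set Rb := g 0 (a + h) - (g 0 a + h * g 1 a) with hRbdef
  set Rc := g 0 (a + h / 2) - (g 0 a + h / 2 * g 1 a) with hRcdef
  have key : (g 0 a + g 0 (a + h)) / 2 - g 0 (a + h / 2) = Rb / 2 + (-Rc) := by
    rw [hRbdef, hRcdef]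
    ring
  rw [key]
  have htri := abs_add_le (Rb / 2) (-Rc)
  rw [abs_neg, abs_div] at htri
  have h2 : |(2 : ℝ)| = 2 := by norm_num
  rw [h2] at htri
  nlinarith [mul_nonneg hM0 (pow_nonneg hh.le 2)]
end F

def e1v : ℝ × ℝ := (1, 0)
def e2v : ℝ × ℝ := (0, 1)

lemma norm_e1v : ‖e1v‖ = 1 := by simp [e1v, Prod.norm_def]
lemma norm_e2v : ‖e2v‖ = 1 := by simp [e2v, Prod.norm_def]

lemma cast_le4 {m : ℕ} (h : m ≤ 4) : ((m : ℕ) : WithTop ℕ∞) ≤ (4 : WithTop ℕ∞) := by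
  exact_mod_cast h

lemma xchain_hasDerivAt {U : Set (ℝ × ℝ)} (hU : IsOpen U) {f : ℝ × ℝ → ℝ}
    (hf : ContDiffOn ℝ 4 f U) (LB : List (ℝ × ℝ)) (n : ℕ) (hlen : LB.length + n ≤ 4) (y : ℝ) :
    ∀ k < n, ∀ t ∈ {x : ℝ | (x, y) ∈ U},
      HasDerivAt (fun x => (List.replicate k e1v ++ LB).foldr dvf f (x, y))
        ((List.replicate (k + 1) e1v ++ LB).foldr dvf f (t, y)) t := by
  intro k hk t ht
  have hlen2 : (List.replicate k e1v ++ LB).length + 1 ≤ 4 := by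
    simp [List.length_append, List.length_replicate]
    omega
  have hF : DifferentiableOn ℝ ((List.replicate k e1v ++ LB).foldr dvf f) U := by
    have h1 := foldr_dvf_contDiffOn hU (List.replicate k e1v ++ LB) 1
      (hf.of_le (cast_le4 hlen2))
    exact h1.differentiableOn (by norm_num)
  have h2 := hasDerivAt_slice_x hU hF ht
  have h3 : (List.replicate (k + 1) e1v ++ LB).foldr dvf f (t, y)
      = dvf (1, 0) ((List.replicate k e1v ++ LB).foldr dvf f) (t, y) := by
    rw [List.replicate_succ]
    rfl
  rw [h3]
  exact h2

lemma ychain_hasDerivAt {U : Set (ℝ × ℝ)} (hU : IsOpen U) {f : ℝ × ℝ → ℝ}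
    (hf : ContDiffOn ℝ 4 f U) (LB : List (ℝ × ℝ)) (n : ℕ) (hlen : LB.length + n ≤ 4) (x : ℝ) :
    ∀ k < n, ∀ t ∈ {y : ℝ | (x, y) ∈ U},
      HasDerivAt (fun y => (List.replicate k e2v ++ LB).foldr dvf f (x, y))
        ((List.replicate (k + 1) e2v ++ LB).foldr dvf f (x, t)) t := by
  intro k hk t ht
  have hlen2 : (List.replicate k e2v ++ LB).length + 1 ≤ 4 := by
    simp [List.length_append, List.length_replicate]
    omega
  have hF : DifferentiableOn ℝ ((List.replicate k e2v ++ LB).foldr dvf f) U := by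
    have h1 := foldr_dvf_contDiffOn hU (List.replicate k e2v ++ LB) 1
      (hf.of_le (cast_le4 hlen2))
    exact h1.differentiableOn (by norm_num)
  have h2 := hasDerivAt_slice_y hU hF ht
  have h3 : (List.replicate (k + 1) e2v ++ LB).foldr dvf f (x, t)
      = dvf (0, 1) ((List.replicate k e2v ++ LB).foldr dvf f) (x, t) := by
    rw [List.replicate_succ]
    rfl
  rw [h3]
  exact h2

lemma xslice_contOn {U : Set (ℝ × ℝ)} (hU : IsOpen U) {F : ℝ × ℝ → ℝ}
    (hF : ContinuousOn F U) (y : ℝ) :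
    ContinuousOn (fun x => F (x, y)) {x : ℝ | (x, y) ∈ U} :=
  hF.comp (Continuous.continuousOn (by continuity)) (fun _ hx => hx)

lemma yslice_contOn {U : Set (ℝ × ℝ)} (hU : IsOpen U) {F : ℝ × ℝ → ℝ}
    (hF : ContinuousOn F U) (x : ℝ) :
    ContinuousOn (fun y => F (x, y)) {y : ℝ | (x, y) ∈ U} :=
  hF.comp (Continuous.continuousOn (by continuity)) (fun _ hx => hx)

lemma xslice_open {U : Set (ℝ × ℝ)} (hU : IsOpen U) (y : ℝ) :
    IsOpen {x : ℝ | (x, y) ∈ U} := hU.preimage (by continuity)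

lemma yslice_open {U : Set (ℝ × ℝ)} (hU : IsOpen U) (x : ℝ) :
    IsOpen {y : ℝ | (x, y) ∈ U} := hU.preimage (by continuity)

lemma lap2_eq {U : Set (ℝ × ℝ)} (hU : IsOpen U) {f : ℝ × ℝ → ℝ}
    (hf : ContDiffOn ℝ 4 f U) {c : ℝ × ℝ} (hc : c ∈ U) :
    lap2 f c = [e1v, e1v].foldr dvf f c + [e2v, e2v].foldr dvf f c := by
  have hdf : DifferentiableOn ℝ f U :=
    hf.differentiableOn (by norm_num)
  have hdfx : DifferentiableOn ℝ (dvf e1v f) U := by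
    have := foldr_dvf_contDiffOn hU [e1v] 1 (hf.of_le (cast_le4 (by norm_num)))
    exact this.differentiableOn (by norm_num)
  have hdfy : DifferentiableOn ℝ (dvf e2v f) U := by
    have := foldr_dvf_contDiffOn hU [e2v] 1 (hf.of_le (cast_le4 (by norm_num)))
    exact this.differentiableOn (by norm_num)
  have hc' : (c.1, c.2) ∈ U := by simpa using hc
  have hpdx_eq : ∀ p ∈ U, pdx f p = dvf e1v f p := by
    intro p hp
    have hp' : (p.1, p.2) ∈ U := by simpa using hp
    have h1 := (hasDerivAt_slice_x hU hdf hp').deriv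
    show deriv (fun x => f (x, p.2)) p.1 = dvf e1v f p
    rw [h1]
    show dvf (1, 0) f (p.1, p.2) = dvf e1v f p
    simp [e1v]
  have hpdy_eq : ∀ p ∈ U, pdy f p = dvf e2v f p := by
    intro p hp
    have hp' : (p.1, p.2) ∈ U := by simpa using hp
    have h1 := (hasDerivAt_slice_y hU hdf hp').deriv
    show deriv (fun y => f (p.1, y)) p.2 = dvf e2v f p
    rw [h1]
    show dvf (0, 1) f (p.1, p.2) = dvf e2v f p
    simp [e2v]
  have h1 : pdx (pdx f) c = dvf e1v (dvf e1v f) c := by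
    have hOc : IsOpen {x : ℝ | (x, c.2) ∈ U} := xslice_open hU c.2
    have hmem : c.1 ∈ {x : ℝ | (x, c.2) ∈ U} := hc'
    have hev : (fun x => pdx f (x, c.2)) =ᶠ[nhds c.1] (fun x => dvf e1v f (x, c.2)) := by
      filter_upwards [hOc.mem_nhds hmem] with x hx using hpdx_eq (x, c.2) hx
    show deriv (fun x => pdx f (x, c.2)) c.1 = dvf e1v (dvf e1v f) c
    rw [hev.deriv_eq]
    have h2 := (hasDerivAt_slice_x hU hdfx hc').deriv
    rw [h2]
    show dvf (1, 0) (dvf e1v f) (c.1, c.2) = dvf e1v (dvf e1v f) c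
    simp [e1v]
  have h2 : pdy (pdy f) c = dvf e2v (dvf e2v f) c := by
    have hOc : IsOpen {y : ℝ | (c.1, y) ∈ U} := yslice_open hU c.1
    have hmem : c.2 ∈ {y : ℝ | (c.1, y) ∈ U} := hc'
    have hev : (fun y => pdy f (c.1, y)) =ᶠ[nhds c.2] (fun y => dvf e2v f (c.1, y)) := by
      filter_upwards [hOc.mem_nhds hmem] with y hy using hpdy_eq (c.1, y) hy
    show deriv (fun y => pdy f (c.1, y)) c.2 = dvf e2v (dvf e2v f) c
    rw [hev.deriv_eq]
    have h3 := (hasDerivAt_slice_y hU hdfy hc').deriv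
    rw [h3]
    show dvf (0, 1) (dvf e2v f) (c.1, c.2) = dvf e2v (dvf e2v f) c
    simp [e2v]
  show pdx (pdx f) c + pdy (pdy f) c = _
  rw [h1, h2]
  rfl

set_option maxHeartbeats 1600000 in
theorem trapezoidal_cell_error :
    ∃ C : ℝ, 0 < C ∧
      ∀ (h x₀ y₀ : ℝ) (f : ℝ × ℝ → ℝ) (M₄ : ℝ) (U : Set (ℝ × ℝ)),
        0 < h → IsOpen U → Icc x₀ (x₀ + h) ×ˢ Icc y₀ (y₀ + h) ⊆ U →
        ContDiffOn ℝ 4 f U →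
        (∀ p ∈ Icc x₀ (x₀ + h) ×ˢ Icc y₀ (y₀ + h),
          ∀ k : ℕ, k ≤ 4 → ‖iteratedFDeriv ℝ k f p‖ ≤ M₄) →
        |(∫ p in Icc x₀ (x₀ + h) ×ˢ Icc y₀ (y₀ + h), f p)
            - (h ^ 2 / 4) * (f (x₀, y₀) + f (x₀ + h, y₀) + f (x₀, y₀ + h)
                + f (x₀ + h, y₀ + h))
            + (h ^ 4 / 12) * lap2 f (x₀ + h / 2, y₀ + h / 2)|
          ≤ C * M₄ * h ^ 6 := by
  refine ⟨3, by norm_num, ?_⟩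
  intro h x₀ y₀ f M₄ U hh hU hSU hf hM
  have hx01 : x₀ ≤ x₀ + h := by linarith
  have hy01 : y₀ ≤ y₀ + h := by linarith
  have hcx : x₀ + h / 2 ∈ Icc x₀ (x₀ + h) := ⟨by linarith, by linarith⟩
  have hcy : y₀ + h / 2 ∈ Icc y₀ (y₀ + h) := ⟨by linarith, by linarith⟩
  have hy1mem : y₀ + h ∈ Icc y₀ (y₀ + h) := right_mem_Icc.mpr hy01
  have hc00 : (x₀, y₀) ∈ Icc x₀ (x₀ + h) ×ˢ Icc y₀ (y₀ + h) :=
    ⟨left_mem_Icc.mpr hx01, left_mem_Icc.mpr hy01⟩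
  have hM0 : 0 ≤ M₄ := le_trans (norm_nonneg _) (hM (x₀, y₀) hc00 0 (by norm_num))
  have hbd : ∀ L : List (ℝ × ℝ), L.length ≤ 4 → (∀ v ∈ L, ‖v‖ ≤ 1) →
      ∀ p ∈ Icc x₀ (x₀ + h) ×ˢ Icc y₀ (y₀ + h), |L.foldr dvf f p| ≤ M₄ := by
    intro L hlen hv p hp
    exact (foldr_dvf_bound hU (hf.of_le (cast_le4 hlen)) hv (hSU hp)).trans
      (hM p hp L.length hlen)
  have hnorm1 : ∀ v ∈ ([e1v, e1v] : List (ℝ × ℝ)), ‖v‖ ≤ 1 := by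
    intro v hv
    simp only [List.mem_cons, List.not_mem_nil, or_false] at hv
    rcases hv with rfl | rfl <;> simp [norm_e1v]
  have hnorm2 : ∀ v ∈ ([e2v, e2v] : List (ℝ × ℝ)), ‖v‖ ≤ 1 := by
    intro v hv
    simp only [List.mem_cons, List.not_mem_nil, or_false] at hv
    rcases hv with rfl | rfl <;> simp [norm_e2v]
  have hnil : ∀ v ∈ ([] : List (ℝ × ℝ)), ‖v‖ ≤ 1 := by simp
  have hvrep : ∀ (k : ℕ) (LB : List (ℝ × ℝ)) (w : ℝ × ℝ), ‖w‖ ≤ 1 →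
      (∀ v ∈ LB, ‖v‖ ≤ 1) → ∀ v ∈ List.replicate k w ++ LB, ‖v‖ ≤ 1 := by
    intro k LB w hw hLB v hv
    rcases List.mem_append.1 hv with h1 | h2
    · rw [List.eq_of_mem_replicate h1]; exact hw
    · exact hLB v h2
  have hfc : ContinuousOn f U := hf.continuousOn
  have hcont4x : ContinuousOn ((List.replicate 4 e1v ++ ([] : List (ℝ × ℝ))).foldr dvf f) U :=
    (foldr_dvf_contDiffOn hU (List.replicate 4 e1v ++ []) 0 (hf.of_le (cast_le4 (by simp)))).continuousOn
  have hcont4y : ContinuousOn ((List.replicate 4 e2v ++ ([] : List (ℝ × ℝ))).foldr dvf f) U :=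
    (foldr_dvf_contDiffOn hU (List.replicate 4 e2v ++ []) 0 (hf.of_le (cast_le4 (by simp)))).continuousOn
  have hcont2xB : ContinuousOn ((List.replicate 2 e1v ++ [e2v, e2v]).foldr dvf f) U :=
    (foldr_dvf_contDiffOn hU (List.replicate 2 e1v ++ [e2v, e2v]) 0 (hf.of_le (cast_le4 (by simp)))).continuousOn
  have hcont2yB : ContinuousOn ((List.replicate 2 e2v ++ [e1v, e1v]).foldr dvf f) U :=
    (foldr_dvf_contDiffOn hU (List.replicate 2 e2v ++ [e1v, e1v]) 0 (hf.of_le (cast_le4 (by simp)))).continuousOn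
  -- 1D estimates
  have hAy : ∀ x ∈ Icc x₀ (x₀ + h),
      |(∫ t in y₀..(y₀ + h), f (x, t)) - (h / 2) * (f (x, y₀) + f (x, y₀ + h))
        + (h ^ 3 / 12) * [e2v, e2v].foldr dvf f (x, y₀ + h / 2)| ≤ M₄ * h ^ 5 := by
    intro x hx
    exact oneD_A hh (fun k t => (List.replicate k e2v ++ []).foldr dvf f (x, t))
      {y : ℝ | (x, y) ∈ U} (yslice_open hU x) (fun t ht => hSU ⟨hx, ht⟩)
      (ychain_hasDerivAt hU hf [] 4 (by simp) x)
      (yslice_contOn hU hcont4y x)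
      (fun k hk t ht => hbd _ (by simpa using hk) (hvrep k [] e2v (le_of_eq norm_e2v) hnil)
        (x, t) ⟨hx, ht⟩)
  have hAx : ∀ y ∈ Icc y₀ (y₀ + h),
      |(∫ t in x₀..(x₀ + h), f (t, y)) - (h / 2) * (f (x₀, y) + f (x₀ + h, y))
        + (h ^ 3 / 12) * [e1v, e1v].foldr dvf f (x₀ + h / 2, y)| ≤ M₄ * h ^ 5 := by
    intro y hy
    exact oneD_A hh (fun k t => (List.replicate k e1v ++ []).foldr dvf f (t, y))
      {x : ℝ | (x, y) ∈ U} (xslice_open hU y) (fun t ht => hSU ⟨ht, hy⟩)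
      (xchain_hasDerivAt hU hf [] 4 (by simp) y)
      (xslice_contOn hU hcont4x y)
      (fun k hk t ht => hbd _ (by simpa using hk) (hvrep k [] e1v (le_of_eq norm_e1v) hnil)
        (t, y) ⟨ht, hy⟩)
  have hB : |(∫ t in x₀..(x₀ + h), [e2v, e2v].foldr dvf f (t, y₀ + h / 2))
      - h * [e2v, e2v].foldr dvf f (x₀ + h / 2, y₀ + h / 2)| ≤ M₄ * h ^ 3 :=
    oneD_B hh (fun k t => (List.replicate k e1v ++ [e2v, e2v]).foldr dvf f (t, y₀ + h / 2))
      {x : ℝ | (x, y₀ + h / 2) ∈ U} (xslice_open hU _) (fun t ht => hSU ⟨ht, hcy⟩)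
      (xchain_hasDerivAt hU hf [e2v, e2v] 2 (by simp) _)
      (xslice_contOn hU hcont2xB _)
      (fun k hk t ht => hbd _ (by simp; omega) (hvrep k [e2v, e2v] e1v (le_of_eq norm_e1v) hnorm2)
        (t, y₀ + h / 2) ⟨ht, hcy⟩)
  have hC : |([e1v, e1v].foldr dvf f (x₀ + h / 2, y₀)
        + [e1v, e1v].foldr dvf f (x₀ + h / 2, y₀ + h)) / 2
      - [e1v, e1v].foldr dvf f (x₀ + h / 2, y₀ + h / 2)| ≤ M₄ * h ^ 2 :=
    oneD_C hh (fun k t => (List.replicate k e2v ++ [e1v, e1v]).foldr dvf f (x₀ + h / 2, t))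
      {y : ℝ | (x₀ + h / 2, y) ∈ U} (yslice_open hU _) (fun t ht => hSU ⟨hcx, ht⟩)
      (ychain_hasDerivAt hU hf [e1v, e1v] 2 (by simp) _)
      (yslice_contOn hU hcont2yB _)
      (fun k hk t ht => hbd _ (by simp; omega) (hvrep k [e1v, e1v] e2v (le_of_eq norm_e2v) hnorm1)
        (x₀ + h / 2, t) ⟨hcx, ht⟩)
  -- Fubini
  set F : ℝ → ℝ := fun x => ∫ t in y₀..(y₀ + h), f (x, t) with hFdef
  have hfint : IntegrableOn f (Icc x₀ (x₀ + h) ×ˢ Icc y₀ (y₀ + h)) :=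
    (hfc.mono hSU).integrableOn_compact (isCompact_Icc.prod isCompact_Icc)
  have hFeq : ∀ x, (∫ y in Icc y₀ (y₀ + h), f (x, y)) = F x := fun x => by
    rw [MeasureTheory.integral_Icc_eq_integral_Ioc, ← intervalIntegral.integral_of_le hy01]
  have hfint' : Integrable f ((volume.restrict (Icc x₀ (x₀ + h))).prod
      (volume.restrict (Icc y₀ (y₀ + h)))) := by
    rw [Measure.prod_restrict]
    have h1 := hfint
    rwa [MeasureTheory.Measure.volume_eq_prod] at h1
  have hIeq : (∫ p in Icc x₀ (x₀ + h) ×ˢ Icc y₀ (y₀ + h), f p)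
      = ∫ x in x₀..(x₀ + h), F x := by
    rw [MeasureTheory.Measure.volume_eq_prod] at hfint
    rw [MeasureTheory.Measure.volume_eq_prod ℝ ℝ, setIntegral_prod f hfint]
    simp_rw [hFeq]
    rw [MeasureTheory.integral_Icc_eq_integral_Ioc, ← intervalIntegral.integral_of_le hx01]
  have hFint : IntervalIntegrable F volume x₀ (x₀ + h) := by
    rw [intervalIntegrable_iff_integrableOn_Icc_of_le hx01]
    exact hfint'.integral_prod_left.congr (Filter.Eventually.of_forall (fun x => hFeq x))
  -- continuity of x-slices
  have hfa : ContinuousOn (fun x => f (x, y₀)) (Icc x₀ (x₀ + h)) :=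
    (xslice_contOn hU hfc y₀).mono (fun t ht => hSU ⟨ht, left_mem_Icc.mpr hy01⟩)
  have hfb : ContinuousOn (fun x => f (x, y₀ + h)) (Icc x₀ (x₀ + h)) :=
    (xslice_contOn hU hfc _).mono (fun t ht => hSU ⟨ht, hy1mem⟩)
  have hQc : ContinuousOn (fun x => [e2v, e2v].foldr dvf f (x, y₀ + h / 2)) (Icc x₀ (x₀ + h)) := by
    have hDyyc : ContinuousOn ([e2v, e2v].foldr dvf f) U :=
      (foldr_dvf_contDiffOn hU [e2v, e2v] 2 (hf.of_le (cast_le4 (by norm_num)))).continuousOn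
    exact (xslice_contOn hU hDyyc _).mono (fun t ht => hSU ⟨ht, hcy⟩)
  have huX : uIcc x₀ (x₀ + h) = Icc x₀ (x₀ + h) := uIcc_of_le hx01
  have hfaint : IntervalIntegrable (fun x => f (x, y₀)) volume x₀ (x₀ + h) :=
    (huX ▸ hfa).intervalIntegrable
  have hfbint : IntervalIntegrable (fun x => f (x, y₀ + h)) volume x₀ (x₀ + h) :=
    (huX ▸ hfb).intervalIntegrable
  have hQint : IntervalIntegrable (fun x => [e2v, e2v].foldr dvf f (x, y₀ + h / 2))
      volume x₀ (x₀ + h) := (huX ▸ hQc).intervalIntegrable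
  set W : ℝ → ℝ := fun x => (h / 2) * (f (x, y₀) + f (x, y₀ + h))
      - (h ^ 3 / 12) * [e2v, e2v].foldr dvf f (x, y₀ + h / 2) with hWdef
  have hWint : IntervalIntegrable W volume x₀ (x₀ + h) :=
    ((hfaint.add hfbint).const_mul (h / 2)).sub (hQint.const_mul (h ^ 3 / 12))
  have hWval : (∫ x in x₀..(x₀ + h), W x)
      = (h / 2) * ((∫ t in x₀..(x₀ + h), f (t, y₀)) + (∫ t in x₀..(x₀ + h), f (t, y₀ + h)))
        - (h ^ 3 / 12) * (∫ t in x₀..(x₀ + h), [e2v, e2v].foldr dvf f (t, y₀ + h / 2)) := by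
    simp only [hWdef]
    rw [intervalIntegral.integral_sub ((hfaint.add hfbint).const_mul (h / 2))
      (hQint.const_mul (h ^ 3 / 12)), intervalIntegral.integral_const_mul,
      intervalIntegral.integral_const_mul, intervalIntegral.integral_add hfaint hfbint]
  have hE1int : IntervalIntegrable (fun x => F x - W x) volume x₀ (x₀ + h) := hFint.sub hWint
  have hsplitI : (∫ x in x₀..(x₀ + h), F x)
      = (∫ x in x₀..(x₀ + h), W x) + ∫ x in x₀..(x₀ + h), (F x - W x) := by
    rw [← intervalIntegral.integral_add hWint hE1int]
    apply intervalIntegral.integral_congr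
    intro t _
    ring
  have hE1b : |∫ x in x₀..(x₀ + h), (F x - W x)| ≤ h * (M₄ * h ^ 5) := by
    have h1 := intervalIntegral.abs_integral_le_integral_abs
      (f := fun x => F x - W x) (μ := volume) hx01
    have h2 : (∫ x in x₀..(x₀ + h), |F x - W x|)
        ≤ ∫ _x in x₀..(x₀ + h), (M₄ * h ^ 5) :=
      intervalIntegral.integral_mono_on hx01 hE1int.abs intervalIntegrable_const
        (fun x hx => by
          have heq : F x - W x = (∫ t in y₀..(y₀ + h), f (x, t))
              - (h / 2) * (f (x, y₀) + f (x, y₀ + h))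
              + (h ^ 3 / 12) * [e2v, e2v].foldr dvf f (x, y₀ + h / 2) := by
            simp only [hFdef, hWdef]
            ring
          rw [heq]
          exact hAy x hx)
    have h3 : (∫ _x in x₀..(x₀ + h), (M₄ * h ^ 5 : ℝ)) = h * (M₄ * h ^ 5) := by
      rw [intervalIntegral.integral_const, smul_eq_mul]
      congr 1
      ring
    linarith
  have hkey : (∫ p in Icc x₀ (x₀ + h) ×ˢ Icc y₀ (y₀ + h), f p)
      - h ^ 2 / 4 * (f (x₀, y₀) + f (x₀ + h, y₀) + f (x₀, y₀ + h) + f (x₀ + h, y₀ + h))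
      + h ^ 4 / 12 * lap2 f (x₀ + h / 2, y₀ + h / 2)
      = (h / 2) * (((∫ t in x₀..(x₀ + h), f (t, y₀))
            - (h / 2) * (f (x₀, y₀) + f (x₀ + h, y₀))
            + (h ^ 3 / 12) * [e1v, e1v].foldr dvf f (x₀ + h / 2, y₀))
          + ((∫ t in x₀..(x₀ + h), f (t, y₀ + h))
            - (h / 2) * (f (x₀, y₀ + h) + f (x₀ + h, y₀ + h))
            + (h ^ 3 / 12) * [e1v, e1v].foldr dvf f (x₀ + h / 2, y₀ + h)))
        + (∫ x in x₀..(x₀ + h), (F x - W x))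
        - (h ^ 3 / 12) * ((∫ t in x₀..(x₀ + h), [e2v, e2v].foldr dvf f (t, y₀ + h / 2))
            - h * [e2v, e2v].foldr dvf f (x₀ + h / 2, y₀ + h / 2))
        - (h ^ 4 / 12) * (([e1v, e1v].foldr dvf f (x₀ + h / 2, y₀)
            + [e1v, e1v].foldr dvf f (x₀ + h / 2, y₀ + h)) / 2
            - [e1v, e1v].foldr dvf f (x₀ + h / 2, y₀ + h / 2)) := by
    rw [hIeq, hsplitI, hWval, lap2_eq hU hf (hSU ⟨hcx, hcy⟩)]
    ring
  rw [hkey]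
  have habs : ∀ x y : ℝ, |x - y| ≤ |x| + |y| := fun x y => by
    rw [sub_eq_add_neg]
    exact (abs_add_le _ _).trans (by rw [abs_neg])
  set EA := ((∫ t in x₀..(x₀ + h), f (t, y₀))
      - (h / 2) * (f (x₀, y₀) + f (x₀ + h, y₀))
      + (h ^ 3 / 12) * [e1v, e1v].foldr dvf f (x₀ + h / 2, y₀))
      + ((∫ t in x₀..(x₀ + h), f (t, y₀ + h))
      - (h / 2) * (f (x₀, y₀ + h) + f (x₀ + h, y₀ + h))
      + (h ^ 3 / 12) * [e1v, e1v].foldr dvf f (x₀ + h / 2, y₀ + h)) with hEAdef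
  set E1 := ∫ x in x₀..(x₀ + h), (F x - W x) with hE1def
  set EJ := (∫ t in x₀..(x₀ + h), [e2v, e2v].foldr dvf f (t, y₀ + h / 2))
      - h * [e2v, e2v].foldr dvf f (x₀ + h / 2, y₀ + h / 2) with hEJdef
  set EC := ([e1v, e1v].foldr dvf f (x₀ + h / 2, y₀)
      + [e1v, e1v].foldr dvf f (x₀ + h / 2, y₀ + h)) / 2
      - [e1v, e1v].foldr dvf f (x₀ + h / 2, y₀ + h / 2) with hECdef
  have hEA : |EA| ≤ M₄ * h ^ 5 + M₄ * h ^ 5 := by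
    rw [hEAdef]
    exact (abs_add_le _ _).trans (add_le_add (hAx y₀ (left_mem_Icc.mpr hy01)) (hAx (y₀ + h) hy1mem))
  have hstep : |(h / 2) * EA + E1 - (h ^ 3 / 12) * EJ - (h ^ 4 / 12) * EC|
      ≤ |(h / 2) * EA| + |E1| + (|(h ^ 3 / 12) * EJ| + |(h ^ 4 / 12) * EC|) := by
    have e : (h / 2) * EA + E1 - (h ^ 3 / 12) * EJ - (h ^ 4 / 12) * EC
        = ((h / 2) * EA + E1) - ((h ^ 3 / 12) * EJ + (h ^ 4 / 12) * EC) := by ring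
    rw [e]
    refine (habs _ _).trans ?_
    have t1 := abs_add_le ((h / 2) * EA) E1
    have t2 := abs_add_le ((h ^ 3 / 12) * EJ) ((h ^ 4 / 12) * EC)
    linarith
  have b1 : |(h / 2) * EA| ≤ (h / 2) * (M₄ * h ^ 5 + M₄ * h ^ 5) := by
    rw [abs_mul, abs_of_nonneg (show (0:ℝ) ≤ h / 2 by linarith)]
    exact mul_le_mul_of_nonneg_left hEA (by linarith)
  have b3 : |(h ^ 3 / 12) * EJ| ≤ (h ^ 3 / 12) * (M₄ * h ^ 3) := by
    rw [abs_mul, abs_of_nonneg (show (0:ℝ) ≤ h ^ 3 / 12 by positivity)]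
    exact mul_le_mul_of_nonneg_left hB (by positivity)
  have b4 : |(h ^ 4 / 12) * EC| ≤ (h ^ 4 / 12) * (M₄ * h ^ 2) := by
    rw [abs_mul, abs_of_nonneg (show (0:ℝ) ≤ h ^ 4 / 12 by positivity)]
    exact mul_le_mul_of_nonneg_left hC (by positivity)
  have hM46 : 0 ≤ M₄ * h ^ 6 := mul_nonneg hM0 (by positivity)
  nlinarith [hstep, b1, b3, b4, hE1b]
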